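/- The class of timed languages accepted by alternating timed automata is effectively closed under union, intersection and complementation; moreover, for each of these boolean operations the resulting automaton can be chosen so that its number of clocks does not exceed the maximum number of clocks of the input automata (in particular, complementation does not increase the number of clocks). -/

import Mathlib

/-- Clock constraints over a set `C` of clocks: comparisons with natural
number constants, closed under conjunction and negation. -/
inductive ClockConstraint (C : Type) : Type where
  | lt : C → ℕ → ClockConstraint C
  | le : C → ℕ → ClockConstraint C
  | conj : ClockConstraint C → ClockConstraint C → ClockConstraint C
  | neg : ClockConstraint C → ClockConstraint C

/-- Satisfaction of a clock constraint by a clock valuation. -/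
def ClockConstraint.sat {C : Type} (v : C → NNReal) : ClockConstraint C → Prop
  | .lt x c => (v x : ℝ) < (c : ℝ)
  | .le x c => (v x : ℝ) ≤ (c : ℝ)
  | .conj s t => s.sat v ∧ t.sat v
  | .neg s => ¬ s.sat v

/-- Positive boolean formulas over a set `X` of propositions. -/
inductive PosBool (X : Type) : Type where
  | atom : X → PosBool X
  | conj : PosBool X → PosBool X → PosBool X
  | disj : PosBool X → PosBool X → PosBool X

/-- Evaluation of a positive boolean formula under a valuation of atoms. -/
def PosBool.eval {X : Type} (f : X → Prop) : PosBool X → Prop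
  | .atom x => f x
  | .conj b c => b.eval f ∧ c.eval f
  | .disj b c => b.eval f ∨ c.eval f

/-- A positive boolean formula is disjunction-free (purely conjunctive). -/
def PosBool.orFree {X : Type} : PosBool X → Prop
  | .atom _ => True
  | .conj b c => b.orFree ∧ c.orFree
  | .disj _ _ => False

/-- A positive boolean formula is conjunction-free (purely disjunctive). -/
def PosBool.andFree {X : Type} : PosBool X → Prop
  | .atom _ => True
  | .conj _ _ => False
  | .disj b c => b.andFree ∧ c.andFree

open Classical in
/-- Reset the clocks in `r` to zero. -/
noncomputable def resetVal {C : Type} (v : C → NNReal) (r : Set C) : C → NNReal :=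
  fun x => if x ∈ r then 0 else v x

/-- A (finite) timed word: each letter comes with the delay elapsed since the
previous letter (a nonnegative real). -/
abbrev TimedWord (A : Type) : Type := List (A × NNReal)
/-- An alternating timed automaton with input alphabet `A`, clocks `C`,
locations `Q`.  The transition function is given, for each location and
letter, by a finite list of (guard, positive boolean formula) pairs; the
`partition` field is the Partition condition: for every location, letter and
clock valuation there is exactly one defined guard satisfied by the
valuation. -/
structure ATA (A C Q : Type) where
  init : Q
  accept : Set Q
  trans : Q → A → List (ClockConstraint C × PosBool (Q × Set C))
  partition : ∀ (q : Q) (a : A) (v : C → NNReal),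
    ∃! gb : ClockConstraint C × PosBool (Q × Set C), gb ∈ trans q a ∧ gb.1.sat v

/-- Acceptance of a timed word from a given configuration, defined by
recursion on the word: this is exactly the existence of a winning strategy
for Eve in the acceptance game (Eve resolves disjunctions, Adam
conjunctions), and Eve wins iff the final location is accepting. -/
def ATA.AccFrom {A C Q : Type} (M : ATA A C Q) : TimedWord A → Q → (C → NNReal) → Prop
  | [], q, _ => q ∈ M.accept
  | (a, t) :: w, q, v =>
      ∃ gb ∈ M.trans q a, gb.1.sat (fun x => v x + t) ∧
        gb.2.eval (fun qr => M.AccFrom w qr.1 (resetVal (fun x => v x + t) qr.2))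

/-- The timed language of an alternating timed automaton. -/
def ATA.lang {A C Q : Type} (M : ATA A C Q) : Set (TimedWord A) :=
  { w | M.AccFrom w M.init (fun _ => 0) }

/-- A purely universal ATA: no disjunction occurs in the transition formulas. -/
def ATA.PurelyUniversal {A C Q : Type} (M : ATA A C Q) : Prop :=
  ∀ (q : Q) (a : A), ∀ gb ∈ M.trans q a, gb.2.orFree

/-- A purely existential ATA: no conjunction occurs in the transition formulas. -/
def ATA.PurelyExistential {A C Q : Type} (M : ATA A C Q) : Prop :=
  ∀ (q : Q) (a : A), ∀ gb ∈ M.trans q a, gb.2.andFree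

section Aux

variable {A C C' Q Q₁ Q₂ X Y : Type}

/-- Map clocks in a constraint. -/
def ccMap (f : C → C') : ClockConstraint C → ClockConstraint C'
  | .lt x c => .lt (f x) c
  | .le x c => .le (f x) c
  | .conj s t => .conj (ccMap f s) (ccMap f t)
  | .neg s => .neg (ccMap f s)

lemma sat_ccMap (f : C → C') (v : C' → NNReal) (g : ClockConstraint C) :
    (ccMap f g).sat v ↔ g.sat (fun x => v (f x)) := by
  induction g <;> simp [ccMap, ClockConstraint.sat, *]

/-- Map atoms in a positive boolean formula. -/
def pbMap (h : X → Y) : PosBool X → PosBool Y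
  | .atom x => .atom (h x)
  | .conj b c => .conj (pbMap h b) (pbMap h c)
  | .disj b c => .disj (pbMap h b) (pbMap h c)

lemma eval_pbMap (h : X → Y) (f : Y → Prop) (b : PosBool X) :
    (pbMap h b).eval f ↔ b.eval (fun x => f (h x)) := by
  induction b <;> simp [pbMap, PosBool.eval, *]

lemma eval_congr {f g : X → Prop} (h : ∀ x, f x ↔ g x) (b : PosBool X) :
    b.eval f ↔ b.eval g := by
  induction b <;> simp [PosBool.eval, *]

/-- De Morgan dual of a positive boolean formula. -/
def pbDual : PosBool X → PosBool X
  | .atom x => .atom x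
  | .conj b c => .disj (pbDual b) (pbDual c)
  | .disj b c => .conj (pbDual b) (pbDual c)

lemma eval_pbDual (f : X → Prop) (b : PosBool X) :
    (pbDual b).eval f ↔ ¬ b.eval (fun x => ¬ f x) := by
  induction b <;> simp [pbDual, PosBool.eval, *] <;> tauto

lemma exists_mem_map' {l : List X} (g : X → Y) (P : Y → Prop) :
    (∃ y ∈ l.map g, P y) ↔ ∃ x ∈ l, P (g x) := by simp

lemma reset_comp {f : C → C'} (hf : Function.Injective f) (v : C' → NNReal)
    (r : Set C) (x : C) : resetVal v (f '' r) (f x) = resetVal (fun y => v (f y)) r x := by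
  simp only [resetVal]
  by_cases h : x ∈ r <;> simp [h, hf.mem_set_image]

/-- Relabel the clocks of an ATA along an injection. -/
def ATA.mapClocks (f : C → C') (hf : Function.Injective f) (M : ATA A C Q) :
    ATA A C' Q where
  init := M.init
  accept := M.accept
  trans q a := (M.trans q a).map
    (fun gb => (ccMap f gb.1, pbMap (fun qr => (qr.1, f '' qr.2)) gb.2))
  partition := by
    intro q a v
    obtain ⟨gb, ⟨hm, hs⟩, hu⟩ := M.partition q a (fun x => v (f x))
    refine ⟨_, ⟨List.mem_map_of_mem hm, by simpa [sat_ccMap] using hs⟩, ?_⟩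
    rintro gb' ⟨hm', hs'⟩
    obtain ⟨gb₂, hm₂, rfl⟩ := List.mem_map.1 hm'
    rw [hu gb₂ ⟨hm₂, by simpa [sat_ccMap] using hs'⟩]

lemma mapClocks_trans {f : C → C'} (hf : Function.Injective f) (M : ATA A C Q)
    (q : Q) (a : A) : (M.mapClocks f hf).trans q a = (M.trans q a).map
      (fun gb => (ccMap f gb.1, pbMap (fun qr => (qr.1, f '' qr.2)) gb.2)) := rfl

lemma accFrom_mapClocks {f : C → C'} (hf : Function.Injective f) (M : ATA A C Q) :
    ∀ (w : TimedWord A) (q : Q) (v : C' → NNReal),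
      (M.mapClocks f hf).AccFrom w q v ↔ M.AccFrom w q (fun x => v (f x))
  | [], q, v => Iff.rfl
  | (a, t) :: w, q, v => by
    simp only [ATA.AccFrom, mapClocks_trans, exists_mem_map']
    refine exists_congr fun gb => and_congr_right fun _ => ?_
    rw [sat_ccMap, eval_pbMap]
    refine and_congr_right fun _ => eval_congr (fun qr => ?_) _
    rw [accFrom_mapClocks hf M w]
    exact iff_of_eq (congrArg _ (funext fun x => reset_comp hf _ _ x))

lemma lang_mapClocks {f : C → C'} (hf : Function.Injective f) (M : ATA A C Q) :
    (M.mapClocks f hf).lang = M.lang := by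
  ext w
  exact accFrom_mapClocks hf M w M.init _

/-- The dual ATA: dualize all formulas and complement the accepting set. -/
def ATA.dual (M : ATA A C Q) : ATA A C Q where
  init := M.init
  accept := M.acceptᶜ
  trans q a := (M.trans q a).map (fun gb => (gb.1, pbDual gb.2))
  partition := by
    intro q a v
    obtain ⟨gb, ⟨hm, hs⟩, hu⟩ := M.partition q a v
    refine ⟨_, ⟨List.mem_map_of_mem hm, hs⟩, ?_⟩
    rintro gb' ⟨hm', hs'⟩
    obtain ⟨gb₂, hm₂, rfl⟩ := List.mem_map.1 hm'
    rw [hu gb₂ ⟨hm₂, hs'⟩]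

lemma dual_trans (M : ATA A C Q) (q : Q) (a : A) :
    M.dual.trans q a = (M.trans q a).map (fun gb => (gb.1, pbDual gb.2)) := rfl

lemma accFrom_dual (M : ATA A C Q) :
    ∀ (w : TimedWord A) (q : Q) (v : C → NNReal),
      M.dual.AccFrom w q v ↔ ¬ M.AccFrom w q v
  | [], q, v => Iff.rfl
  | (a, t) :: w, q, v => by
    obtain ⟨gb, ⟨hm, hs⟩, hu⟩ := M.partition q a (fun x => v x + t)
    simp only [ATA.AccFrom, dual_trans, exists_mem_map']
    constructor
    · rintro ⟨gb', hm', hs', he⟩ ⟨gb'', hm'', hs'', he''⟩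
      obtain rfl := hu gb' ⟨hm', hs'⟩
      obtain rfl := hu gb'' ⟨hm'', hs''⟩
      rw [eval_pbDual] at he
      exact he (by
        refine (eval_congr (fun qr => ?_) _).2 he''
        rw [accFrom_dual M w, not_not])
    · intro h
      refine ⟨gb, hm, hs, ?_⟩
      rw [eval_pbDual]
      intro he
      refine h ⟨gb, hm, hs, ?_⟩
      refine (eval_congr (fun qr => ?_) _).1 he
      rw [accFrom_dual M w, not_not]

lemma lang_dual (M : ATA A C Q) : M.dual.lang = M.langᶜ := by
  ext w
  exact accFrom_dual M w M.init _

/-- Combine two ATAs over the same clock set: `u = true` gives union,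
`u = false` gives intersection. -/
def ATA.combine (u : Bool) (M₁ : ATA A C Q₁) (M₂ : ATA A C Q₂) :
    ATA A C (Option (Q₁ ⊕ Q₂)) where
  init := none
  accept := {x | match x with
    | none => if u then M₁.init ∈ M₁.accept ∨ M₂.init ∈ M₂.accept
              else M₁.init ∈ M₁.accept ∧ M₂.init ∈ M₂.accept
    | some (.inl q) => q ∈ M₁.accept
    | some (.inr q) => q ∈ M₂.accept}
  trans x a := match x with
    | none => ((M₁.trans M₁.init a) ×ˢ (M₂.trans M₂.init a)).map
        (fun p => (ClockConstraint.conj p.1.1 p.2.1,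
          if u then PosBool.disj (pbMap (fun qr => (some (Sum.inl qr.1), qr.2)) p.1.2)
                     (pbMap (fun qr => (some (Sum.inr qr.1), qr.2)) p.2.2)
          else PosBool.conj (pbMap (fun qr => (some (Sum.inl qr.1), qr.2)) p.1.2)
                     (pbMap (fun qr => (some (Sum.inr qr.1), qr.2)) p.2.2)))
    | some (.inl q) => (M₁.trans q a).map
        (fun gb => (gb.1, pbMap (fun qr => (some (Sum.inl qr.1), qr.2)) gb.2))
    | some (.inr q) => (M₂.trans q a).map
        (fun gb => (gb.1, pbMap (fun qr => (some (Sum.inr qr.1), qr.2)) gb.2))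
  partition := by
    rintro (_ | q) a v
    · obtain ⟨gb₁, ⟨hm₁, hs₁⟩, hu₁⟩ := M₁.partition M₁.init a v
      obtain ⟨gb₂, ⟨hm₂, hs₂⟩, hu₂⟩ := M₂.partition M₂.init a v
      refine ⟨_, ⟨List.mem_map_of_mem (List.pair_mem_product.2 ⟨hm₁, hm₂⟩),
        ⟨hs₁, hs₂⟩⟩, ?_⟩
      rintro gb' ⟨hm', hs'⟩
      obtain ⟨⟨p₁, p₂⟩, hp, rfl⟩ := List.mem_map.1 hm'
      obtain ⟨hp₁, hp₂⟩ := List.pair_mem_product.1 hp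
      obtain ⟨hs'₁, hs'₂⟩ := hs'
      rw [hu₁ p₁ ⟨hp₁, hs'₁⟩, hu₂ p₂ ⟨hp₂, hs'₂⟩]
    · rcases q with q | q
      · obtain ⟨gb, ⟨hm, hs⟩, hu⟩ := M₁.partition q a v
        refine ⟨_, ⟨List.mem_map_of_mem hm, hs⟩, ?_⟩
        rintro gb' ⟨hm', hs'⟩
        obtain ⟨gb₂, hm₂, rfl⟩ := List.mem_map.1 hm'
        rw [hu gb₂ ⟨hm₂, hs'⟩]
      · obtain ⟨gb, ⟨hm, hs⟩, hu⟩ := M₂.partition q a v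
        refine ⟨_, ⟨List.mem_map_of_mem hm, hs⟩, ?_⟩
        rintro gb' ⟨hm', hs'⟩
        obtain ⟨gb₂, hm₂, rfl⟩ := List.mem_map.1 hm'
        rw [hu gb₂ ⟨hm₂, hs'⟩]

lemma combine_trans_inl (u : Bool) (M₁ : ATA A C Q₁) (M₂ : ATA A C Q₂)
    (q : Q₁) (a : A) : (ATA.combine u M₁ M₂).trans (some (Sum.inl q)) a =
      (M₁.trans q a).map
        (fun gb => (gb.1, pbMap (fun qr => (some (Sum.inl qr.1), qr.2)) gb.2)) := rfl

lemma combine_trans_inr (u : Bool) (M₁ : ATA A C Q₁) (M₂ : ATA A C Q₂)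
    (q : Q₂) (a : A) : (ATA.combine u M₁ M₂).trans (some (Sum.inr q)) a =
      (M₂.trans q a).map
        (fun gb => (gb.1, pbMap (fun qr => (some (Sum.inr qr.1), qr.2)) gb.2)) := rfl

lemma combine_trans_none (u : Bool) (M₁ : ATA A C Q₁) (M₂ : ATA A C Q₂)
    (a : A) : (ATA.combine u M₁ M₂).trans none a =
      ((M₁.trans M₁.init a) ×ˢ (M₂.trans M₂.init a)).map
        (fun p => (ClockConstraint.conj p.1.1 p.2.1,
          if u then PosBool.disj (pbMap (fun qr => (some (Sum.inl qr.1), qr.2)) p.1.2)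
                     (pbMap (fun qr => (some (Sum.inr qr.1), qr.2)) p.2.2)
          else PosBool.conj (pbMap (fun qr => (some (Sum.inl qr.1), qr.2)) p.1.2)
                     (pbMap (fun qr => (some (Sum.inr qr.1), qr.2)) p.2.2))) := rfl

lemma accFrom_combine_inl (u : Bool) (M₁ : ATA A C Q₁) (M₂ : ATA A C Q₂) :
    ∀ (w : TimedWord A) (q : Q₁) (v : C → NNReal),
      (ATA.combine u M₁ M₂).AccFrom w (some (Sum.inl q)) v ↔ M₁.AccFrom w q v
  | [], q, v => Iff.rfl
  | (a, t) :: w, q, v => by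
    simp only [ATA.AccFrom, combine_trans_inl, exists_mem_map']
    refine exists_congr fun gb => and_congr_right fun _ => and_congr_right fun _ => ?_
    rw [eval_pbMap]
    exact eval_congr (fun qr : Q₁ × Set C => accFrom_combine_inl u M₁ M₂ w qr.1 _) _

lemma accFrom_combine_inr (u : Bool) (M₁ : ATA A C Q₁) (M₂ : ATA A C Q₂) :
    ∀ (w : TimedWord A) (q : Q₂) (v : C → NNReal),
      (ATA.combine u M₁ M₂).AccFrom w (some (Sum.inr q)) v ↔ M₂.AccFrom w q v
  | [], q, v => Iff.rfl
  | (a, t) :: w, q, v => by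
    simp only [ATA.AccFrom, combine_trans_inr, exists_mem_map']
    refine exists_congr fun gb => and_congr_right fun _ => and_congr_right fun _ => ?_
    rw [eval_pbMap]
    exact eval_congr (fun qr : Q₂ × Set C => accFrom_combine_inr u M₁ M₂ w qr.1 _) _

lemma accFrom_combine_none (u : Bool) (M₁ : ATA A C Q₁) (M₂ : ATA A C Q₂)
    (w : TimedWord A) (v : C → NNReal) :
    (ATA.combine u M₁ M₂).AccFrom w none v ↔
      (if u then M₁.AccFrom w M₁.init v ∨ M₂.AccFrom w M₂.init v
       else M₁.AccFrom w M₁.init v ∧ M₂.AccFrom w M₂.init v) := by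
  cases w with
  | nil =>
    show _ ∈ _ ↔ _
    cases u <;> rfl
  | cons at_ w =>
    obtain ⟨a, t⟩ := at_
    obtain ⟨gb₁, ⟨hm₁, hs₁⟩, hu₁⟩ := M₁.partition M₁.init a (fun x => v x + t)
    obtain ⟨gb₂, ⟨hm₂, hs₂⟩, hu₂⟩ := M₂.partition M₂.init a (fun x => v x + t)
    simp only [ATA.AccFrom, combine_trans_none, exists_mem_map']
    have key : ∀ b₁ : PosBool (Q₁ × Set C), ∀ b₂ : PosBool (Q₂ × Set C),
        (pbMap (fun qr => (some (Sum.inl qr.1), qr.2)) b₁).eval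
          (fun qr => (ATA.combine u M₁ M₂).AccFrom w qr.1
            (resetVal (fun x => v x + t) qr.2)) ↔
        b₁.eval (fun qr => M₁.AccFrom w qr.1 (resetVal (fun x => v x + t) qr.2)) := by
      intro b₁ b₂
      rw [eval_pbMap]
      exact eval_congr (fun qr : Q₁ × Set C => accFrom_combine_inl u M₁ M₂ w qr.1 _) _
    have key2 : ∀ b₂ : PosBool (Q₂ × Set C),
        (pbMap (fun qr => (some (Sum.inr qr.1), qr.2)) b₂).eval
          (fun qr => (ATA.combine u M₁ M₂).AccFrom w qr.1
            (resetVal (fun x => v x + t) qr.2)) ↔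
        b₂.eval (fun qr => M₂.AccFrom w qr.1 (resetVal (fun x => v x + t) qr.2)) := by
      intro b₂
      rw [eval_pbMap]
      exact eval_congr (fun qr : Q₂ × Set C => accFrom_combine_inr u M₁ M₂ w qr.1 _) _
    cases u with
    | true =>
      simp only [if_true]
      constructor
      · rintro ⟨⟨p₁, p₂⟩, hp, ⟨hsa, hsb⟩, he⟩
        obtain ⟨hp₁, hp₂⟩ := List.pair_mem_product.1 hp
        simp only [PosBool.eval] at he
        rcases he with he | he
        · exact Or.inl ⟨p₁, hp₁, hsa, (key p₁.2 p₂.2).1 he⟩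
        · exact Or.inr ⟨p₂, hp₂, hsb, (key2 p₂.2).1 he⟩
      · rintro (⟨gb, hm, hs, he⟩ | ⟨gb, hm, hs, he⟩)
        · exact ⟨(gb, gb₂), List.pair_mem_product.2 ⟨hm, hm₂⟩, ⟨hs, hs₂⟩,
            Or.inl ((key gb.2 gb₂.2).2 he)⟩
        · exact ⟨(gb₁, gb), List.pair_mem_product.2 ⟨hm₁, hm⟩, ⟨hs₁, hs⟩,
            Or.inr ((key2 gb.2).2 he)⟩
    | false =>
      simp only [Bool.false_eq_true, if_false]
      constructor
      · rintro ⟨⟨p₁, p₂⟩, hp, ⟨hsa, hsb⟩, he⟩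
        obtain ⟨hp₁, hp₂⟩ := List.pair_mem_product.1 hp
        simp only [PosBool.eval] at he
        exact ⟨⟨p₁, hp₁, hsa, (key p₁.2 p₂.2).1 he.1⟩,
          ⟨p₂, hp₂, hsb, (key2 p₂.2).1 he.2⟩⟩
      · rintro ⟨⟨ga, hma, hsa, hea⟩, ⟨gc, hmc, hsc, hec⟩⟩
        exact ⟨(ga, gc), List.pair_mem_product.2 ⟨hma, hmc⟩, ⟨hsa, hsc⟩,
          ⟨(key ga.2 gc.2).2 hea, (key2 gc.2).2 hec⟩⟩

lemma lang_combine_true (M₁ : ATA A C Q₁) (M₂ : ATA A C Q₂) :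
    (ATA.combine true M₁ M₂).lang = M₁.lang ∪ M₂.lang := by
  ext w
  exact accFrom_combine_none true M₁ M₂ w (fun _ => 0)

lemma lang_combine_false (M₁ : ATA A C Q₁) (M₂ : ATA A C Q₂) :
    (ATA.combine false M₁ M₂).lang = M₁.lang ∩ M₂.lang := by
  ext w
  exact accFrom_combine_none false M₁ M₂ w (fun _ => 0)

end Aux

/-- The class of timed languages accepted by alternating
timed automata is closed under union, intersection and complementation, and
for each boolean operation the resulting automaton can be chosen with at
most `max` of the numbers of clocks of the inputs (for complementation, at
most the number of clocks of the input). -/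
theorem ata_closed_under_boolean_operations
    {A Q₁ Q₂ : Type} [Fintype A] [Fintype Q₁] [Fintype Q₂] {n₁ n₂ : ℕ}
    (M₁ : ATA A (Fin n₁) Q₁) (M₂ : ATA A (Fin n₂) Q₂) :
    (∃ (Q : Type) (_ : Fintype Q) (n : ℕ) (M : ATA A (Fin n) Q),
        n ≤ max n₁ n₂ ∧ M.lang = M₁.lang ∪ M₂.lang) ∧
    (∃ (Q : Type) (_ : Fintype Q) (n : ℕ) (M : ATA A (Fin n) Q),
        n ≤ max n₁ n₂ ∧ M.lang = M₁.lang ∩ M₂.lang) ∧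
    (∃ (Q : Type) (_ : Fintype Q) (n : ℕ) (M : ATA A (Fin n) Q),
        n ≤ n₁ ∧ M.lang = M₁.langᶜ) := by
  classical
  have hf₁ : Function.Injective (Fin.castLE (le_max_left n₁ n₂)) :=
    Fin.castLE_injective _
  have hf₂ : Function.Injective (Fin.castLE (le_max_right n₁ n₂)) :=
    Fin.castLE_injective _
  exact ⟨⟨Option (Q₁ ⊕ Q₂), inferInstance, max n₁ n₂,
      ATA.combine true (M₁.mapClocks _ hf₁) (M₂.mapClocks _ hf₂), le_refl _,
      by rw [lang_combine_true, lang_mapClocks, lang_mapClocks]⟩,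
    ⟨Option (Q₁ ⊕ Q₂), inferInstance, max n₁ n₂,
      ATA.combine false (M₁.mapClocks _ hf₁) (M₂.mapClocks _ hf₂), le_refl _,
      by rw [lang_combine_false, lang_mapClocks, lang_mapClocks]⟩,
    ⟨Q₁, inferInstance, n₁, M₁.dual, le_refl _, lang_dual M₁⟩⟩
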